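/- Let w₀, w₁, …, w_n be real numbers, not all zero, and let f : {−1,1}^n → {−1,1} be defined by f(x) = sign(w₀ + Σ_{i=1}^n w_i x_i). Then Inf(f) ≥ √(Σ_{i=0}^n w_i²) / (2√2 · max_{0≤i≤n} |w_i|) − |f̂(∅)|; in particular, Inf(f) ≥ √(Σ_{i=0}^n w_i²) / (2√2 · max_{0≤i≤n} |w_i|) − 1. -/

import Mathlib

open Finset Real MeasureTheory ProbabilityTheory
open scoped Classical

/-- sign: maps z to 1 if z > 0 and to −1 if z ≤ 0. -/
noncomputable def sgn (z : ℝ) : ℝ := if 0 < z then 1 else -1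

/-- interpret a Bool as ±1. -/
def pm (b : Bool) : ℝ := if b then 1 else -1

/-- probability of an event under the uniform distribution on {−1,1}^n. -/
noncomputable def unifPr (n : ℕ) (E : (Fin n → Bool) → Prop) : ℝ :=
  ((Finset.univ : Finset (Fin n → Bool)).filter E).card / 2 ^ n

/-- expectation under the uniform distribution on {−1,1}^n. -/
noncomputable def unifExp (n : ℕ) (g : (Fin n → Bool) → ℝ) : ℝ :=
  (∑ x : Fin n → Bool, g x) / 2 ^ n

/-- flip the i-th coordinate. -/
def flipAt {n : ℕ} (i : Fin n) (x : Fin n → Bool) : Fin n → Bool :=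
  Function.update x i (!(x i))

/-- influence of coordinate i. -/
noncomputable def infl {n : ℕ} (f : (Fin n → Bool) → ℝ) (i : Fin n) : ℝ :=
  unifPr n (fun x => f x ≠ f (flipAt i x))

/-- total influence. -/
noncomputable def totalInfl {n : ℕ} (f : (Fin n → Bool) → ℝ) : ℝ :=
  ∑ i, infl f i

/-- Fourier coefficient f̂(S). -/
noncomputable def fCoeff {n : ℕ} (f : (Fin n → Bool) → ℝ) (S : Finset (Fin n)) : ℝ :=
  unifExp n (fun x => f x * ∏ i ∈ S, pm (x i))

/-- Fourier entropy with log base 2 (0 · log(1/0) is 0 by convention, which holds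
definitionally since `Real.log 0 = 0` in Mathlib). -/
noncomputable def fourierEntropy {n : ℕ} (f : (Fin n → Bool) → ℝ) : ℝ :=
  ∑ S : Finset (Fin n), (fCoeff f S) ^ 2 * Real.logb 2 (1 / (fCoeff f S) ^ 2)

/-- The linear threshold function with weights w₀, w₁, …, w_n. -/
noncomputable def ltf (n : ℕ) (w : Fin (n + 1) → ℝ) : (Fin n → Bool) → ℝ :=
  fun x => sgn (w 0 + ∑ i : Fin n, w i.succ * pm (x i))

section basic
variable {n : ℕ}

lemma pm_mul_self (b : Bool) : pm b * pm b = 1 := by cases b <;> simp [pm]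
lemma pm_not (b : Bool) : pm (!b) = - pm b := by cases b <;> simp [pm]
lemma abs_pm (b : Bool) : |pm b| = 1 := by cases b <;> simp [pm]

lemma flipAt_flipAt (i : Fin n) (x : Fin n → Bool) : flipAt i (flipAt i x) = x := by
  funext j
  by_cases h : j = i
  · subst h; simp [flipAt]
  · simp [flipAt, Function.update_of_ne h]

lemma flipAt_ne (i : Fin n) (x : Fin n → Bool) : flipAt i x ≠ x := by
  intro h
  have := congrFun h i
  simp [flipAt] at this

def chi (n : ℕ) (i : Fin (n + 1)) (x : Fin n → Bool) : ℝ :=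
  Fin.cases 1 (fun j => pm (x j)) i

@[simp] lemma chi_zero (x : Fin n → Bool) : chi n 0 x = 1 := rfl

@[simp] lemma chi_succ (j : Fin n) (x : Fin n → Bool) : chi n j.succ x = pm (x j) := by
  simp [chi]

lemma chi_mul_self (i : Fin (n + 1)) (x : Fin n → Bool) : chi n i x * chi n i x = 1 := by
  induction i using Fin.cases with
  | zero => simp
  | succ j => simp [pm_mul_self]

lemma chi_flip (i : Fin (n + 1)) (c : Fin n) (x : Fin n → Bool) :
    chi n i (flipAt c x) = (if i = c.succ then -1 else 1) * chi n i x := by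
  induction i using Fin.cases with
  | zero =>
    rw [if_neg (fun h => (Fin.succ_ne_zero c) h.symm)]
    simp
  | succ j =>
    by_cases h : j = c
    · subst h
      rw [if_pos rfl]
      simp [flipAt, pm_not]
    · rw [if_neg (by simpa [Fin.succ_inj] using h)]
      simp [flipAt, Function.update_of_ne h]

lemma sum_flip_neg (c : Fin n) (g : (Fin n → Bool) → ℝ)
    (h : ∀ x, g (flipAt c x) = - g x) : ∑ x : Fin n → Bool, g x = 0 := by
  refine Finset.sum_ninvolution (flipAt c) (fun x => ?_) (fun x _ => flipAt_ne c x)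
    (fun x => Finset.mem_univ _) (fun x => flipAt_flipAt c x)
  rw [h x]; ring

lemma card_cube (n : ℕ) : ((Finset.univ : Finset (Fin n → Bool)).card : ℝ) = 2 ^ n := by
  simp [Finset.card_univ]

lemma sum_chi2 (i j : Fin (n + 1)) :
    ∑ x : Fin n → Bool, chi n i x * chi n j x = if i = j then (2 ^ n : ℝ) else 0 := by
  by_cases h : i = j
  · subst h
    rw [if_pos rfl, Finset.sum_congr rfl (fun x _ => chi_mul_self i x)]
    simp [card_cube]
  · rw [if_neg h]
    rcases eq_or_ne i 0 with hi | hi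
    · obtain ⟨c, hc⟩ := Fin.exists_succ_eq_of_ne_zero
        (show j ≠ 0 from fun hj => h (hi.trans hj.symm))
      refine sum_flip_neg c _ (fun x => ?_)
      rw [chi_flip, chi_flip, if_neg (fun hh => h (hh.trans hc)), if_pos hc.symm]
      ring
    · obtain ⟨c, hc⟩ := Fin.exists_succ_eq_of_ne_zero hi
      refine sum_flip_neg c _ (fun x => ?_)
      rw [chi_flip, chi_flip, if_pos hc.symm, if_neg (fun hh => h (hc.symm.trans hh.symm))]
      ring

section chi4
variable {n : ℕ}

lemma sum_chi4_flip (i j k l : Fin (n + 1)) (c : Fin n)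
    (h : (if i = c.succ then (-1 : ℝ) else 1) * (if j = c.succ then (-1 : ℝ) else 1) *
        (if k = c.succ then (-1 : ℝ) else 1) * (if l = c.succ then (-1 : ℝ) else 1) = -1) :
    ∑ x : Fin n → Bool, chi n i x * chi n j x * chi n k x * chi n l x = 0 := by
  refine sum_flip_neg c _ (fun x => ?_)
  rw [chi_flip i, chi_flip j, chi_flip k, chi_flip l]
  linear_combination (chi n i x * chi n j x * chi n k x * chi n l x) * h

lemma sum_chi4 (i j k l : Fin (n + 1)) :
    ∑ x : Fin n → Bool, chi n i x * chi n j x * chi n k x * chi n l x =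
      if (i = j ∧ k = l) ∨ (i = k ∧ j = l) ∨ (i = l ∧ j = k) then (2 ^ n : ℝ) else 0 := by
  have hval : ∀ (p q : Fin (n+1)) (x : Fin n → Bool),
      chi n p x * chi n p x * (chi n q x * chi n q x) = 1 := by
    intro p q x
    rw [chi_mul_self, chi_mul_self, mul_one]
  by_cases hij : i = j
  · subst hij
    rcases eq_or_ne k l with hkl | hkl
    · subst hkl
      rw [if_pos (Or.inl ⟨rfl, rfl⟩)]
      have e : ∀ x : Fin n → Bool, chi n i x * chi n i x * chi n k x * chi n k x = 1 :=
        fun x => by linear_combination (chi n k x * chi n k x) * chi_mul_self i x + chi_mul_self k x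
      rw [Finset.sum_congr rfl fun x _ => e x]
      simp [card_cube]
    · rw [if_neg (by
        rintro (⟨-, h⟩ | ⟨h1, h2⟩ | ⟨h1, h2⟩)
        · exact hkl h
        · exact hkl (h1.symm.trans h2)
        · exact hkl (h2.symm.trans h1))]
      have e : ∀ x : Fin n → Bool,
          chi n i x * chi n i x * chi n k x * chi n l x = chi n k x * chi n l x :=
        fun x => by linear_combination (chi n k x * chi n l x) * chi_mul_self i x
      rw [Finset.sum_congr rfl fun x _ => e x, sum_chi2, if_neg hkl]
  · rcases eq_or_ne k l with hkl | hkl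
    · subst hkl
      rw [if_neg (by
        rintro (⟨h1, -⟩ | ⟨h1, h2⟩ | ⟨h1, h2⟩)
        · exact hij h1
        · exact hij (h1.trans h2.symm)
        · exact hij (h1.trans h2.symm))]
      have e : ∀ x : Fin n → Bool,
          chi n i x * chi n j x * chi n k x * chi n k x = chi n i x * chi n j x :=
        fun x => by linear_combination (chi n i x * chi n j x) * chi_mul_self k x
      rw [Finset.sum_congr rfl fun x _ => e x, sum_chi2, if_neg hij]
    · -- i ≠ j, k ≠ l
      by_cases hik : i = k
      · subst hik
        rcases eq_or_ne j l with hjl | hjl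
        · subst hjl
          rw [if_pos (Or.inr (Or.inl ⟨rfl, rfl⟩))]
          have e : ∀ x : Fin n → Bool, chi n i x * chi n j x * chi n i x * chi n j x = 1 :=
            fun x => by linear_combination (chi n j x * chi n j x) * chi_mul_self i x + chi_mul_self j x
          rw [Finset.sum_congr rfl fun x _ => e x]
          simp [card_cube]
        · rw [if_neg (by
            rintro (⟨h1, -⟩ | ⟨-, h2⟩ | ⟨h1, h2⟩)
            · exact hij h1
            · exact hjl h2
            · exact hij h2.symm)]
          rcases eq_or_ne j 0 with hj0 | hj0
          · have hl0 : l ≠ 0 := fun h => hjl (hj0.trans h.symm)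
            obtain ⟨c, hc⟩ := Fin.exists_succ_eq_of_ne_zero hl0
            refine sum_chi4_flip i j i l c ?_
            rw [if_neg (fun hh => hkl (hh.trans hc)), if_neg (fun hh => hjl (hh.trans hc)),
              if_pos hc.symm]
            norm_num
          · obtain ⟨c, hc⟩ := Fin.exists_succ_eq_of_ne_zero hj0
            refine sum_chi4_flip i j i l c ?_
            rw [if_neg (fun hh => hij (hh.trans hc)), if_pos hc.symm,
              if_neg (fun hh => hjl (hc.symm.trans hh.symm))]
            norm_num
      · by_cases hil : i = l
        · subst hil
          rcases eq_or_ne j k with hjk | hjk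
          · subst hjk
            rw [if_pos (Or.inr (Or.inr ⟨rfl, rfl⟩))]
            have e : ∀ x : Fin n → Bool, chi n i x * chi n j x * chi n j x * chi n i x = 1 :=
              fun x => by linear_combination (chi n j x * chi n j x) * chi_mul_self i x + chi_mul_self j x
            rw [Finset.sum_congr rfl fun x _ => e x]
            simp [card_cube]
          · rw [if_neg (by
              rintro (⟨h1, -⟩ | ⟨h1, -⟩ | ⟨-, h2⟩)
              · exact hij h1
              · exact hik h1
              · exact hjk h2)]
            rcases eq_or_ne j 0 with hj0 | hj0
            · have hk0 : k ≠ 0 := fun h => hjk (hj0.trans h.symm)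
              obtain ⟨c, hc⟩ := Fin.exists_succ_eq_of_ne_zero hk0
              refine sum_chi4_flip i j k i c ?_
              rw [if_neg (fun hh => hik (hh.trans hc)), if_neg (fun hh => hjk (hh.trans hc)),
                if_pos hc.symm]
              norm_num
            · obtain ⟨c, hc⟩ := Fin.exists_succ_eq_of_ne_zero hj0
              refine sum_chi4_flip i j k i c ?_
              rw [if_neg (fun hh => hij (hh.trans hc)), if_pos hc.symm,
                if_neg (fun hh => hjk (hc.symm.trans hh.symm))]
              norm_num
        · -- i differs from j, k, l
          rw [if_neg (by
            rintro (⟨h1, -⟩ | ⟨h1, -⟩ | ⟨h1, -⟩)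
            · exact hij h1
            · exact hik h1
            · exact hil h1)]
          rcases eq_or_ne i 0 with hi0 | hi0
          · by_cases hjk : j = k
            · subst hjk
              have hl0 : l ≠ 0 := fun h => hil (hi0.trans h.symm)
              obtain ⟨c, hc⟩ := Fin.exists_succ_eq_of_ne_zero hl0
              refine sum_chi4_flip i j j l c ?_
              rw [if_neg (fun hh => hil (hh.trans hc)), if_neg (fun hh => hkl (hh.trans hc)),
                if_pos hc.symm]
              norm_num
            · by_cases hjl : j = l
              · subst hjl
                have hk0 : k ≠ 0 := fun h => hik (hi0.trans h.symm)
                obtain ⟨c, hc⟩ := Fin.exists_succ_eq_of_ne_zero hk0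
                refine sum_chi4_flip i j k j c ?_
                rw [if_neg (fun hh => hik (hh.trans hc)), if_neg (fun hh => hjk (hh.trans hc)),
                  if_pos hc.symm]
                norm_num
              · have hj0 : j ≠ 0 := fun h => hij (hi0.trans h.symm)
                obtain ⟨c, hc⟩ := Fin.exists_succ_eq_of_ne_zero hj0
                refine sum_chi4_flip i j k l c ?_
                rw [if_neg (fun hh => hij (hh.trans hc)), if_pos hc.symm,
                  if_neg (fun hh => hjk (hh.trans hc).symm),
                  if_neg (fun hh => hjl (hh.trans hc).symm)]
                norm_num
          · obtain ⟨c, hc⟩ := Fin.exists_succ_eq_of_ne_zero hi0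
            refine sum_chi4_flip i j k l c ?_
            rw [if_pos hc.symm, if_neg (fun hh => hij (hh.trans hc).symm),
              if_neg (fun hh => hik (hh.trans hc).symm),
              if_neg (fun hh => hil (hh.trans hc).symm)]
            norm_num

end chi4

section moments
variable {n : ℕ}

lemma sum_pow_four {ι : Type*} [Fintype ι] (a : ι → ℝ) :
    (∑ i, a i) ^ 4 = ∑ i, ∑ j, ∑ k, ∑ l, a i * a j * a k * a l := by
  calc (∑ i, a i) ^ 4
      = ((∑ i, a i) * (∑ i, a i)) * ((∑ i, a i) * (∑ i, a i)) := by ring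
    _ = (∑ i, ∑ j, a i * a j) * (∑ k, ∑ l, a k * a l) := by
        rw [Finset.sum_mul_sum, Finset.sum_mul_sum]
    _ = ∑ i, ∑ k, (∑ j, a i * a j) * (∑ l, a k * a l) := by
        rw [Finset.sum_mul_sum]
    _ = ∑ i, ∑ k, ∑ j, ∑ l, (a i * a j) * (a k * a l) := by
        exact Finset.sum_congr rfl fun i _ => Finset.sum_congr rfl fun k _ =>
          Finset.sum_mul_sum _ _ _ _
    _ = ∑ i, ∑ j, ∑ k, ∑ l, a i * a j * a k * a l := by
        refine Finset.sum_congr rfl fun i _ => Finset.sum_comm.trans ?_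
        exact Finset.sum_congr rfl fun j _ => Finset.sum_congr rfl fun k _ =>
          Finset.sum_congr rfl fun l _ => by ring

lemma sum_sq_chi (w : Fin (n + 1) → ℝ) :
    ∑ x : Fin n → Bool, (∑ i : Fin (n + 1), w i * chi n i x) ^ 2
      = 2 ^ n * ∑ i, w i ^ 2 := by
  have e1 : ∀ x : Fin n → Bool, (∑ i : Fin (n + 1), w i * chi n i x) ^ 2
      = ∑ i : Fin (n + 1), ∑ j : Fin (n + 1), (w i * w j) * (chi n i x * chi n j x) := by
    intro x
    rw [sq, Finset.sum_mul_sum]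
    exact Finset.sum_congr rfl fun i _ => Finset.sum_congr rfl fun j _ => by ring
  rw [Finset.sum_congr rfl fun x _ => e1 x, Finset.sum_comm]
  rw [Finset.sum_congr rfl fun i _ => Finset.sum_comm]
  have e2 : ∀ i j : Fin (n + 1),
      ∑ x : Fin n → Bool, (w i * w j) * (chi n i x * chi n j x)
        = (w i * w j) * (if i = j then (2 ^ n : ℝ) else 0) := by
    intro i j
    rw [← Finset.mul_sum, sum_chi2]
  rw [Finset.sum_congr rfl fun i _ =>
    Finset.sum_congr rfl fun j _ => e2 i j]
  simp only [mul_ite, mul_zero, Finset.sum_ite_eq, Finset.mem_univ, if_true]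
  rw [Finset.sum_congr rfl fun i _ => (by ring : w i * w i * 2 ^ n = 2 ^ n * w i ^ 2),
    ← Finset.mul_sum]

lemma ite_sq_nonneg (p : Prop) [Decidable p] (a : ℝ) : (0:ℝ) ≤ if p then a ^ 2 else 0 := by
  split <;> positivity

lemma sum_quad_chi (w : Fin (n + 1) → ℝ) :
    ∑ x : Fin n → Bool, (∑ i : Fin (n + 1), w i * chi n i x) ^ 4
      ≤ 3 * 2 ^ n * (∑ i, w i ^ 2) ^ 2 := by
  have e1 : ∀ x : Fin n → Bool, (∑ i : Fin (n + 1), w i * chi n i x) ^ 4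
      = ∑ i : Fin (n + 1), ∑ j : Fin (n + 1), ∑ k : Fin (n + 1), ∑ l : Fin (n + 1),
          (w i * w j * w k * w l) * (chi n i x * chi n j x * chi n k x * chi n l x) := by
    intro x
    rw [sum_pow_four]
    exact Finset.sum_congr rfl fun i _ => Finset.sum_congr rfl fun j _ =>
      Finset.sum_congr rfl fun k _ => Finset.sum_congr rfl fun l _ => by ring
  rw [Finset.sum_congr rfl fun x _ => e1 x, Finset.sum_comm]
  rw [Finset.sum_congr rfl fun i _ => Finset.sum_comm]
  rw [Finset.sum_congr rfl fun i _ => Finset.sum_congr rfl fun j _ => Finset.sum_comm]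
  rw [Finset.sum_congr rfl fun i _ => Finset.sum_congr rfl fun j _ =>
    Finset.sum_congr rfl fun k _ => Finset.sum_comm]
  have e2 : ∀ i j k l : Fin (n + 1),
      ∑ x : Fin n → Bool,
          (w i * w j * w k * w l) * (chi n i x * chi n j x * chi n k x * chi n l x)
        = (w i * w j * w k * w l) *
            (if (i = j ∧ k = l) ∨ (i = k ∧ j = l) ∨ (i = l ∧ j = k) then (2 ^ n : ℝ) else 0) := by
    intro i j k l
    rw [← Finset.mul_sum, sum_chi4]
  rw [Finset.sum_congr rfl fun i _ => Finset.sum_congr rfl fun j _ =>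
    Finset.sum_congr rfl fun k _ => Finset.sum_congr rfl fun l _ => e2 i j k l]
  have hN : (0:ℝ) ≤ 2 ^ n := by positivity
  have key : ∀ i j k l : Fin (n + 1),
      (w i * w j * w k * w l) *
          (if (i = j ∧ k = l) ∨ (i = k ∧ j = l) ∨ (i = l ∧ j = k) then (2 ^ n : ℝ) else 0)
        ≤ (2 ^ n : ℝ) *
            ((if j = i then w i ^ 2 else 0) * (if l = k then w k ^ 2 else 0)
              + (if k = i then w i ^ 2 else 0) * (if l = j then w j ^ 2 else 0)
              + (if l = i then w i ^ 2 else 0) * (if k = j then w j ^ 2 else 0)) := by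
    intro i j k l
    have t1 : (0:ℝ) ≤ (if j = i then w i ^ 2 else 0) * (if l = k then w k ^ 2 else 0) :=
      mul_nonneg (ite_sq_nonneg _ _) (ite_sq_nonneg _ _)
    have t2 : (0:ℝ) ≤ (if k = i then w i ^ 2 else 0) * (if l = j then w j ^ 2 else 0) :=
      mul_nonneg (ite_sq_nonneg _ _) (ite_sq_nonneg _ _)
    have t3 : (0:ℝ) ≤ (if l = i then w i ^ 2 else 0) * (if k = j then w j ^ 2 else 0) :=
      mul_nonneg (ite_sq_nonneg _ _) (ite_sq_nonneg _ _)
    by_cases h : (i = j ∧ k = l) ∨ (i = k ∧ j = l) ∨ (i = l ∧ j = k)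
    · rw [if_pos h]
      rcases h with ⟨rfl, rfl⟩ | ⟨rfl, rfl⟩ | ⟨rfl, rfl⟩ <;>
        simp only [eq_self_iff_true, if_true] at t1 t2 t3 ⊢ <;>
        nlinarith [t1, t2, t3, hN, mul_nonneg hN t1, mul_nonneg hN t2, mul_nonneg hN t3]
    · rw [if_neg h, mul_zero]
      have := add_nonneg (add_nonneg t1 t2) t3
      positivity
  calc ∑ i : Fin (n+1), ∑ j : Fin (n+1), ∑ k : Fin (n+1), ∑ l : Fin (n+1),
        (w i * w j * w k * w l) *
          (if (i = j ∧ k = l) ∨ (i = k ∧ j = l) ∨ (i = l ∧ j = k) then (2 ^ n : ℝ) else 0)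
      ≤ ∑ i : Fin (n+1), ∑ j : Fin (n+1), ∑ k : Fin (n+1), ∑ l : Fin (n+1),
          (2 ^ n : ℝ) *
            ((if j = i then w i ^ 2 else 0) * (if l = k then w k ^ 2 else 0)
              + (if k = i then w i ^ 2 else 0) * (if l = j then w j ^ 2 else 0)
              + (if l = i then w i ^ 2 else 0) * (if k = j then w j ^ 2 else 0)) := by
        refine Finset.sum_le_sum fun i _ => Finset.sum_le_sum fun j _ =>
          Finset.sum_le_sum fun k _ => Finset.sum_le_sum fun l _ => key i j k l
    _ = 3 * 2 ^ n * (∑ i, w i ^ 2) ^ 2 := by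
        simp only [mul_add, Finset.sum_add_distrib, ← Finset.mul_sum, ← Finset.sum_mul,
          Finset.sum_ite_eq', Finset.mem_univ, if_true]
        ring
end moments

section assembly
variable {n : ℕ}

lemma sgn_mul_self (z : ℝ) : sgn z * z = |z| := by
  unfold sgn
  split
  · rw [one_mul, abs_of_pos ‹_›]
  · rw [neg_one_mul, abs_of_nonpos (le_of_not_gt ‹_›)]

lemma abs_sgn (z : ℝ) : |sgn z| = 1 := by unfold sgn; split <;> simp

lemma khintchine (w : Fin (n + 1) → ℝ) (hS : 0 < ∑ i, w i ^ 2) :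
    (2:ℝ) ^ n * (Real.sqrt (∑ i, w i ^ 2) / (2 * Real.sqrt 2))
      ≤ ∑ x : Fin n → Bool, |∑ i : Fin (n + 1), w i * chi n i x| := by
  have hN : (0:ℝ) < 2 ^ n := by positivity
  have h2 := sum_sq_chi w
  have h4 := sum_quad_chi w
  have hu0 : 0 ≤ ∑ x : Fin n → Bool, |∑ i : Fin (n + 1), w i * chi n i x| :=
    Finset.sum_nonneg fun x _ => abs_nonneg _
  have hv0 : 0 ≤ ∑ x : Fin n → Bool, |∑ i : Fin (n + 1), w i * chi n i x| ^ 3 :=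
    Finset.sum_nonneg fun x _ => by positivity
  -- Cauchy–Schwarz 1
  have cs1 : (∑ x : Fin n → Bool, (∑ i : Fin (n + 1), w i * chi n i x) ^ 2) ^ 2
      ≤ (∑ x : Fin n → Bool, |∑ i : Fin (n + 1), w i * chi n i x|) *
        (∑ x : Fin n → Bool, |∑ i : Fin (n + 1), w i * chi n i x| ^ 3) := by
    have base := Finset.sum_mul_sq_le_sq_mul_sq Finset.univ
      (fun x : Fin n → Bool => Real.sqrt |∑ i : Fin (n + 1), w i * chi n i x|)
      (fun x : Fin n → Bool =>
        |∑ i : Fin (n + 1), w i * chi n i x| * Real.sqrt |∑ i : Fin (n + 1), w i * chi n i x|)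
    have ea : ∀ x : Fin n → Bool,
        Real.sqrt |∑ i : Fin (n + 1), w i * chi n i x| *
          (|∑ i : Fin (n + 1), w i * chi n i x| * Real.sqrt |∑ i : Fin (n + 1), w i * chi n i x|)
        = (∑ i : Fin (n + 1), w i * chi n i x) ^ 2 := by
      intro x
      rw [show Real.sqrt |∑ i : Fin (n + 1), w i * chi n i x| *
          (|∑ i : Fin (n + 1), w i * chi n i x| * Real.sqrt |∑ i : Fin (n + 1), w i * chi n i x|)
          = (Real.sqrt |∑ i : Fin (n + 1), w i * chi n i x| *
             Real.sqrt |∑ i : Fin (n + 1), w i * chi n i x|) *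
            |∑ i : Fin (n + 1), w i * chi n i x| from by ring,
        Real.mul_self_sqrt (abs_nonneg _), ← sq_abs]
      rw [sq]
    have eb : ∀ x : Fin n → Bool,
        (Real.sqrt |∑ i : Fin (n + 1), w i * chi n i x|) ^ 2
          = |∑ i : Fin (n + 1), w i * chi n i x| :=
      fun x => Real.sq_sqrt (abs_nonneg _)
    have ec : ∀ x : Fin n → Bool,
        (|∑ i : Fin (n + 1), w i * chi n i x| * Real.sqrt |∑ i : Fin (n + 1), w i * chi n i x|) ^ 2
          = |∑ i : Fin (n + 1), w i * chi n i x| ^ 3 := by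
      intro x
      rw [mul_pow, Real.sq_sqrt (abs_nonneg _)]
      ring
    rw [Finset.sum_congr rfl fun x _ => ea x, Finset.sum_congr rfl fun x _ => eb x,
      Finset.sum_congr rfl fun x _ => ec x] at base
    exact base
  -- Cauchy–Schwarz 2
  have cs2 : (∑ x : Fin n → Bool, |∑ i : Fin (n + 1), w i * chi n i x| ^ 3) ^ 2
      ≤ (∑ x : Fin n → Bool, (∑ i : Fin (n + 1), w i * chi n i x) ^ 2) *
        (∑ x : Fin n → Bool, (∑ i : Fin (n + 1), w i * chi n i x) ^ 4) := by
    have base := Finset.sum_mul_sq_le_sq_mul_sq Finset.univ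
      (fun x : Fin n → Bool => |∑ i : Fin (n + 1), w i * chi n i x|)
      (fun x : Fin n → Bool => (∑ i : Fin (n + 1), w i * chi n i x) ^ 2)
    have ea : ∀ x : Fin n → Bool,
        |∑ i : Fin (n + 1), w i * chi n i x| * (∑ i : Fin (n + 1), w i * chi n i x) ^ 2
          = |∑ i : Fin (n + 1), w i * chi n i x| ^ 3 := by
      intro x
      rw [← sq_abs]
      ring
    have eb : ∀ x : Fin n → Bool,
        |∑ i : Fin (n + 1), w i * chi n i x| ^ 2 = (∑ i : Fin (n + 1), w i * chi n i x) ^ 2 :=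
      fun x => sq_abs _
    have ec : ∀ x : Fin n → Bool,
        ((∑ i : Fin (n + 1), w i * chi n i x) ^ 2) ^ 2 = (∑ i : Fin (n + 1), w i * chi n i x) ^ 4 :=
      fun x => by ring
    rw [Finset.sum_congr rfl fun x _ => ea x, Finset.sum_congr rfl fun x _ => eb x,
      Finset.sum_congr rfl fun x _ => ec x] at base
    exact base
  set u := ∑ x : Fin n → Bool, |∑ i : Fin (n + 1), w i * chi n i x| with hu
  set v := ∑ x : Fin n → Bool, |∑ i : Fin (n + 1), w i * chi n i x| ^ 3 with hv
  set S := ∑ i, w i ^ 2 with hSdef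
  rw [h2] at cs1
  have hB : v ^ 2 ≤ ((2:ℝ) ^ n * S) * (3 * 2 ^ n * S ^ 2) := by
    refine cs2.trans ?_
    rw [h2]
    exact mul_le_mul_of_nonneg_left h4 (by positivity)
  have hchain : ((2:ℝ) ^ n * S) ^ 2 * ((2:ℝ) ^ n * S) ^ 2
      ≤ u ^ 2 * (((2:ℝ) ^ n * S) * (3 * 2 ^ n * S ^ 2)) := by
    calc ((2:ℝ) ^ n * S) ^ 2 * ((2:ℝ) ^ n * S) ^ 2
        ≤ (u * v) * (u * v) :=
          mul_le_mul cs1 cs1 (by positivity) (mul_nonneg hu0 hv0)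
      _ = u ^ 2 * v ^ 2 := by ring
      _ ≤ u ^ 2 * (((2:ℝ) ^ n * S) * (3 * 2 ^ n * S ^ 2)) :=
          mul_le_mul_of_nonneg_left hB (sq_nonneg u)
  have hu2 : ((2:ℝ) ^ n) ^ 2 * S ≤ 3 * u ^ 2 := by
    have hpos : (0:ℝ) < ((2:ℝ) ^ n) ^ 2 * S ^ 3 := by positivity
    rw [← mul_le_mul_iff_of_pos_right hpos]
    calc ((2:ℝ) ^ n) ^ 2 * S * (((2:ℝ) ^ n) ^ 2 * S ^ 3)
        = ((2:ℝ) ^ n * S) ^ 2 * ((2:ℝ) ^ n * S) ^ 2 := by ring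
      _ ≤ u ^ 2 * (((2:ℝ) ^ n * S) * (3 * 2 ^ n * S ^ 2)) := hchain
      _ = 3 * u ^ 2 * (((2:ℝ) ^ n) ^ 2 * S ^ 3) := by ring
  have hfin : ((2:ℝ) ^ n * (Real.sqrt S / (2 * Real.sqrt 2))) ^ 2 ≤ u ^ 2 := by
    have h2' : (Real.sqrt 2) ^ 2 = 2 := Real.sq_sqrt (by norm_num)
    have hs' : (Real.sqrt S) ^ 2 = S := Real.sq_sqrt hS.le
    have heq : ((2:ℝ) ^ n * (Real.sqrt S / (2 * Real.sqrt 2))) ^ 2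
        = ((2:ℝ) ^ n) ^ 2 * S / 8 := by
      rw [mul_pow, div_pow, mul_pow, hs', h2']
      ring
    rw [heq]
    nlinarith [hu2, mul_pos (mul_pos hN hN) hS]
  have h0 : 0 ≤ (2:ℝ) ^ n * (Real.sqrt S / (2 * Real.sqrt 2)) := by positivity
  calc (2:ℝ) ^ n * (Real.sqrt S / (2 * Real.sqrt 2))
      = Real.sqrt (((2:ℝ) ^ n * (Real.sqrt S / (2 * Real.sqrt 2))) ^ 2) :=
        (Real.sqrt_sq h0).symm
    _ ≤ Real.sqrt (u ^ 2) := Real.sqrt_le_sqrt hfin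
    _ = u := Real.sqrt_sq hu0

lemma sum_abs_corr (f : (Fin n → Bool) → ℝ) (hf : ∀ x, |f x| = 1) (i : Fin n) :
    |∑ x : Fin n → Bool, f x * pm (x i)| ≤ 2 ^ n * infl f i := by
  have hbij : Function.Bijective (flipAt i) :=
    Function.Involutive.bijective (fun x => flipAt_flipAt i x)
  have hre : ∑ x : Fin n → Bool, f (flipAt i x) * pm ((flipAt i x) i)
      = ∑ x : Fin n → Bool, f x * pm (x i) :=
    Fintype.sum_bijective (flipAt i) hbij _ _ (fun x => rfl)
  have h2A : (2:ℝ) * ∑ x : Fin n → Bool, f x * pm (x i)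
      = ∑ x : Fin n → Bool, pm (x i) * (f x - f (flipAt i x)) := by
    calc (2:ℝ) * ∑ x : Fin n → Bool, f x * pm (x i)
        = (∑ x : Fin n → Bool, f x * pm (x i)) +
            ∑ x : Fin n → Bool, f (flipAt i x) * pm ((flipAt i x) i) := by rw [hre]; ring
      _ = ∑ x : Fin n → Bool, (f x * pm (x i) + f (flipAt i x) * pm ((flipAt i x) i)) :=
          Finset.sum_add_distrib.symm
      _ = ∑ x : Fin n → Bool, pm (x i) * (f x - f (flipAt i x)) := by
          refine Finset.sum_congr rfl fun x _ => ?_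
          rw [show (flipAt i x) i = !(x i) from Function.update_self i _ x, pm_not]
          ring
  have habs : |∑ x : Fin n → Bool, pm (x i) * (f x - f (flipAt i x))|
      ≤ ∑ x : Fin n → Bool, (if f x ≠ f (flipAt i x) then (2:ℝ) else 0) := by
    refine (Finset.abs_sum_le_sum_abs _ _).trans (Finset.sum_le_sum fun x _ => ?_)
    rw [abs_mul, abs_pm, one_mul]
    by_cases hfx : f x = f (flipAt i x)
    · simp [hfx]
    · rw [if_pos hfx]
      have h1 := (hf x).le
      have h2 := (hf (flipAt i x)).le
      rw [abs_le] at h1 h2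
      exact abs_le.mpr ⟨by linarith [h1.1, h2.2], by linarith [h1.2, h2.1]⟩
  have hcount : ∑ x : Fin n → Bool, (if f x ≠ f (flipAt i x) then (2:ℝ) else 0)
      = 2 ^ n * infl f i * 2 := by
    rw [← Finset.sum_filter]
    rw [Finset.sum_const, nsmul_eq_mul]
    rw [infl, unifPr]
    field_simp
    convert rfl
    rfl
  have habs2 : (2:ℝ) * |∑ x : Fin n → Bool, f x * pm (x i)| ≤ 2 ^ n * infl f i * 2 := by
    calc (2:ℝ) * |∑ x : Fin n → Bool, f x * pm (x i)|
        = |(2:ℝ) * ∑ x : Fin n → Bool, f x * pm (x i)| := by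
          rw [abs_mul, abs_of_pos (by norm_num : (0:ℝ) < 2)]
      _ = |∑ x : Fin n → Bool, pm (x i) * (f x - f (flipAt i x))| := by rw [h2A]
      _ ≤ ∑ x : Fin n → Bool, (if f x ≠ f (flipAt i x) then (2:ℝ) else 0) := habs
      _ = 2 ^ n * infl f i * 2 := hcount
  linarith

end assembly


section main
variable {n : ℕ}

/-- Khintchine-based lower bound on the total influence of an LTF. -/
theorem influence_khintchine_lower_bound (n : ℕ) (w : Fin (n + 1) → ℝ) (hw : w ≠ 0) :
    totalInfl (ltf n w) ≥
      Real.sqrt (∑ i, w i ^ 2) /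
        (2 * Real.sqrt 2 * Finset.univ.sup' Finset.univ_nonempty (fun i => |w i|))
        - |fCoeff (ltf n w) ∅| ∧
    totalInfl (ltf n w) ≥
      Real.sqrt (∑ i, w i ^ 2) /
        (2 * Real.sqrt 2 * Finset.univ.sup' Finset.univ_nonempty (fun i => |w i|))
        - 1 := by
  have hN : (0:ℝ) < 2 ^ n := by positivity
  obtain ⟨i0, hi0⟩ := Function.ne_iff.mp hw
  have hi0' : w i0 ≠ 0 := by simpa using hi0
  have hS : 0 < ∑ i, w i ^ 2 := by
    have h1 : 0 < w i0 ^ 2 := by positivity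
    
    exact lt_of_lt_of_le h1
      (Finset.single_le_sum (fun i _ => sq_nonneg (w i)) (Finset.mem_univ i0))
  set M := Finset.univ.sup' Finset.univ_nonempty (fun i : Fin (n + 1) => |w i|) with hMdef
  have hMax : ∀ i, |w i| ≤ M := fun i => Finset.le_sup' (fun i => |w i|) (Finset.mem_univ i)
  have hMpos : 0 < M := lt_of_lt_of_le (abs_pos.mpr hi0') (hMax i0)
  have hLdef : ∀ x : Fin n → Bool,
      w 0 + ∑ i : Fin n, w i.succ * pm (x i) = ∑ i : Fin (n + 1), w i * chi n i x := by
    intro x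
    rw [Fin.sum_univ_succ]
    simp
  have hfx : ∀ x, ltf n w x = sgn (∑ i : Fin (n + 1), w i * chi n i x) := by
    intro x
    rw [ltf, ← hLdef]
  have habsf : ∀ x, |ltf n w x| = 1 := fun x => by rw [hfx x, abs_sgn]
  -- E[f·L] = E|L|
  have hufL : ∑ x : Fin n → Bool, ltf n w x * (∑ i : Fin (n + 1), w i * chi n i x)
      = ∑ x : Fin n → Bool, |∑ i : Fin (n + 1), w i * chi n i x| :=
    Finset.sum_congr rfl fun x _ => by rw [hfx x, sgn_mul_self]
  -- decomposition into Fourier coefficients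
  have hdec : ∑ x : Fin n → Bool, ltf n w x * (∑ i : Fin (n + 1), w i * chi n i x)
      = ∑ i : Fin (n + 1), w i * ∑ x : Fin n → Bool, ltf n w x * chi n i x := by
    calc ∑ x : Fin n → Bool, ltf n w x * (∑ i : Fin (n + 1), w i * chi n i x)
        = ∑ x : Fin n → Bool, ∑ i : Fin (n + 1), w i * (ltf n w x * chi n i x) := by
          refine Finset.sum_congr rfl fun x _ => ?_
          rw [Finset.mul_sum]
          exact Finset.sum_congr rfl fun i _ => by ring
      _ = ∑ i : Fin (n + 1), ∑ x : Fin n → Bool, w i * (ltf n w x * chi n i x) :=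
          Finset.sum_comm
      _ = ∑ i : Fin (n + 1), w i * ∑ x : Fin n → Bool, ltf n w x * chi n i x := by
          refine Finset.sum_congr rfl fun i _ => ?_
          rw [Finset.mul_sum]
  -- the empty coefficient
  have hA0 : ∑ x : Fin n → Bool, ltf n w x * chi n 0 x = 2 ^ n * fCoeff (ltf n w) ∅ := by
    rw [fCoeff, unifExp]
    simp only [Finset.prod_empty, mul_one, chi_zero]
    field_simp
  -- coefficient bounds
  have hAi : ∀ i : Fin n,
      |∑ x : Fin n → Bool, ltf n w x * chi n i.succ x| ≤ 2 ^ n * infl (ltf n w) i := by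
    intro i
    have : ∑ x : Fin n → Bool, ltf n w x * chi n i.succ x
        = ∑ x : Fin n → Bool, ltf n w x * pm (x i) :=
      Finset.sum_congr rfl fun x _ => by rw [chi_succ]
    rw [this]
    exact sum_abs_corr (ltf n w) habsf i
  have hinfl0 : ∀ i : Fin n, 0 ≤ infl (ltf n w) i := by
    intro i
    rw [infl, unifPr]
    exact div_nonneg (Nat.cast_nonneg _) (by positivity)
  -- the upper bound
  have hbound : ∑ i : Fin (n + 1), w i * ∑ x : Fin n → Bool, ltf n w x * chi n i x
      ≤ M * (2 ^ n * (|fCoeff (ltf n w) ∅| + totalInfl (ltf n w))) := by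
    calc ∑ i : Fin (n + 1), w i * ∑ x : Fin n → Bool, ltf n w x * chi n i x
        ≤ ∑ i : Fin (n + 1), |w i * ∑ x : Fin n → Bool, ltf n w x * chi n i x| :=
          Finset.sum_le_sum fun i _ => le_abs_self _
      _ = ∑ i : Fin (n + 1), |w i| * |∑ x : Fin n → Bool, ltf n w x * chi n i x| :=
          Finset.sum_congr rfl fun i _ => abs_mul _ _
      _ ≤ ∑ i : Fin (n + 1), M * |∑ x : Fin n → Bool, ltf n w x * chi n i x| :=
          Finset.sum_le_sum fun i _ =>
            mul_le_mul_of_nonneg_right (hMax i) (abs_nonneg _)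
      _ = M * ∑ i : Fin (n + 1), |∑ x : Fin n → Bool, ltf n w x * chi n i x| :=
          (Finset.mul_sum _ _ _).symm
      _ ≤ M * (2 ^ n * (|fCoeff (ltf n w) ∅| + totalInfl (ltf n w))) := by
          refine mul_le_mul_of_nonneg_left ?_ hMpos.le
          rw [Fin.sum_univ_succ]
          have e0 : |∑ x : Fin n → Bool, ltf n w x * chi n 0 x|
              = 2 ^ n * |fCoeff (ltf n w) ∅| := by
            rw [hA0, abs_mul, abs_of_pos hN]
          rw [e0, totalInfl, mul_add, Finset.mul_sum]
          exact add_le_add le_rfl (Finset.sum_le_sum fun i _ => hAi i)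
  have hkh := khintchine w hS
  rw [← hufL, hdec] at hkh
  have hmain : Real.sqrt (∑ i, w i ^ 2) / (2 * Real.sqrt 2)
      ≤ M * (|fCoeff (ltf n w) ∅| + totalInfl (ltf n w)) := by
    have h1 : (2:ℝ) ^ n * (Real.sqrt (∑ i, w i ^ 2) / (2 * Real.sqrt 2))
        ≤ 2 ^ n * (M * (|fCoeff (ltf n w) ∅| + totalInfl (ltf n w))) := by
      calc (2:ℝ) ^ n * (Real.sqrt (∑ i, w i ^ 2) / (2 * Real.sqrt 2))
          ≤ ∑ i : Fin (n + 1), w i * ∑ x : Fin n → Bool, ltf n w x * chi n i x := hkh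
        _ ≤ M * (2 ^ n * (|fCoeff (ltf n w) ∅| + totalInfl (ltf n w))) := hbound
        _ = 2 ^ n * (M * (|fCoeff (ltf n w) ∅| + totalInfl (ltf n w))) := by ring
    exact le_of_mul_le_mul_left h1 hN
  have goal1 : totalInfl (ltf n w) ≥
      Real.sqrt (∑ i, w i ^ 2) / (2 * Real.sqrt 2 * M) - |fCoeff (ltf n w) ∅| := by
    rw [ge_iff_le, sub_le_iff_le_add]
    have hsplit : Real.sqrt (∑ i, w i ^ 2) / (2 * Real.sqrt 2 * M)
        = (Real.sqrt (∑ i, w i ^ 2) / (2 * Real.sqrt 2)) / M := by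
      rw [div_div]
    rw [hsplit, div_le_iff₀ hMpos]
    calc Real.sqrt (∑ i, w i ^ 2) / (2 * Real.sqrt 2)
        ≤ M * (|fCoeff (ltf n w) ∅| + totalInfl (ltf n w)) := hmain
      _ = (totalInfl (ltf n w) + |fCoeff (ltf n w) ∅|) * M := by ring
  refine ⟨goal1, ?_⟩
  have hc1 : |fCoeff (ltf n w) ∅| ≤ 1 := by
    rw [fCoeff, unifExp]
    simp only [Finset.prod_empty, mul_one]
    rw [abs_div, abs_of_pos hN, div_le_one hN]
    calc |∑ x : Fin n → Bool, ltf n w x| ≤ ∑ x : Fin n → Bool, |ltf n w x| :=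
        Finset.abs_sum_le_sum_abs _ _
      _ = 2 ^ n := by
          rw [Finset.sum_congr rfl fun x _ => habsf x, Finset.sum_const, nsmul_eq_mul,
            mul_one, card_cube]
  have := goal1
  rw [ge_iff_le] at this ⊢
  linarith

end main
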